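/- For any ℓ, k, k' ∈ ℕ, the 3D radial Zernike polynomials satisfy the orthonormality relation ∫₀¹ R_ℓ^k(r) R_ℓ^{k'}(r) r² dr = δ_{k,k'}, where R_ℓ^k(r) = √(2ℓ+4k+3) Σ_{s=0}^k (−1)^s C(k,s) C(ℓ+2k−s+1/2, k) r^{ℓ+2k−2s} and C(x,n) = Γ(x+1)/(n!·Γ(x−n+1)). -/

import Mathlib

noncomputable section

/-- The generalized binomial coefficient `C(x, n) = Γ(x+1) / (n! · Γ(x-n+1))`. -/
def genBinom (x : ℝ) (n : ℕ) : ℝ :=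
  Real.Gamma (x + 1) / (n.factorial * Real.Gamma (x - n + 1))

/-- The 3D radial Zernike polynomial
`R_ℓ^k(r) = √(2ℓ+4k+3) Σ_{s=0}^k (−1)^s C(k,s) C(ℓ+2k−s+1/2, k) r^{ℓ+2k−2s}`. -/
def zernikeR (ℓ k : ℕ) (r : ℝ) : ℝ :=
  Real.sqrt (2 * ℓ + 4 * k + 3) *
    ∑ s ∈ Finset.range (k + 1),
      (-1 : ℝ) ^ s * (k.choose s) * genBinom ((ℓ : ℝ) + 2 * k - s + 1 / 2) k *
        r ^ (ℓ + 2 * k - 2 * s)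

section ZernikeAux

open Finset Polynomial fwdDiff

lemma fwdDiff_polyEval (p : ℝ[X]) :
    Δ_[(1:ℝ)] (fun t => p.eval t) = fun t => (p.comp (X + C 1) - p).eval t := by
  funext t; simp [fwdDiff, eval_comp]

lemma degree_comp_sub_lt (p : ℝ[X]) (hp : p ≠ 0) :
    (p.comp (X + C 1) - p).degree < p.degree := by
  rcases eq_or_ne p.natDegree 0 with h | h
  · obtain ⟨c, rfl⟩ := Polynomial.natDegree_eq_zero.mp h
    simp only [C_comp, sub_self, degree_zero]
    exact bot_lt_iff_ne_bot.mpr (degree_eq_bot.not.mpr hp)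
  · have hq : (X + C (1:ℝ)).natDegree = 1 := natDegree_X_add_C 1
    have hlc : (p.comp (X + C 1)).leadingCoeff = p.leadingCoeff := by
      rw [leadingCoeff_comp (by rw [hq]; norm_num)]
      rw [(monic_X_add_C (1:ℝ)).leadingCoeff, one_pow, mul_one]
    have hcomp_ne : p.comp (X + C 1) ≠ 0 := by
      intro h0
      apply hp
      rw [← leadingCoeff_eq_zero, ← hlc, h0, leadingCoeff_zero]
    have hdeg : (p.comp (X + C 1)).degree = p.degree := by
      rw [degree_eq_natDegree hcomp_ne, degree_eq_natDegree hp, natDegree_comp, hq, mul_one]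
    rw [← hdeg]; exact degree_sub_lt hdeg hcomp_ne hlc

lemma fwdDiff_iter_zero (n : ℕ) : (Δ_[(1:ℝ)])^[n] (fun _ => (0:ℝ)) = fun _ => 0 := by
  induction n with
  | zero => rfl
  | succ m ihm =>
    rw [Function.iterate_succ_apply]
    have : Δ_[(1:ℝ)] (fun _ => (0:ℝ)) = fun _ => 0 := by funext t; simp [fwdDiff]
    rw [this, ihm]

lemma fwdDiff_iter_poly : ∀ (n : ℕ) (p : ℝ[X]), p.degree < (n : ℕ) →
    (Δ_[(1:ℝ)])^[n] (fun t => p.eval t) = fun _ => 0 := by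
  intro n
  induction n with
  | zero =>
    intro p hp
    have : p = 0 := by
      rw [← degree_eq_bot]
      exact Nat.WithBot.lt_zero_iff.mp (by exact_mod_cast hp)
    simp [this]
  | succ n ih =>
    intro p hp
    rcases eq_or_ne p 0 with rfl | hpne
    · have h0 : (fun t : ℝ => (0:ℝ[X]).eval t) = fun _ => (0:ℝ) := by funext t; simp
      rw [h0, fwdDiff_iter_zero]
    · rw [Function.iterate_succ_apply, fwdDiff_polyEval]
      apply ih
      calc (p.comp (X + C 1) - p).degree < p.degree := degree_comp_sub_lt p hpne
        _ ≤ (n : ℕ) := by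
            have := hp
            rcases (degree_eq_natDegree hpne) ▸ this with h'
            rw [degree_eq_natDegree hpne]
            exact_mod_cast Nat.lt_succ_iff.mp (by exact_mod_cast h')

lemma alt_sum_poly (n : ℕ) (p : ℝ[X]) (hp : p.degree < (n : ℕ)) :
    ∑ u ∈ range (n + 1), (-1 : ℝ) ^ u * (n.choose u) * p.eval (u:ℝ) = 0 := by
  have h := fwdDiff_iter_eq_sum_shift (1:ℝ) (fun t => p.eval t) n 0
  rw [fwdDiff_iter_poly n p hp] at h
  have h2 : (0:ℝ) = ∑ u ∈ range (n+1), ((-1:ℝ)^(n-u) * (n.choose u)) * p.eval (u:ℝ) := by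
    calc (0:ℝ) = ∑ u ∈ range (n+1), ((-1:ℤ)^(n-u) * (n.choose u)) • p.eval ((0:ℝ) + u • (1:ℝ)) := h
      _ = ∑ u ∈ range (n+1), ((-1:ℝ)^(n-u) * (n.choose u)) * p.eval (u:ℝ) := by
          refine Finset.sum_congr rfl fun u hu => ?_
          simp [zsmul_eq_mul]
  have h3 : ∀ u ∈ range (n+1), ((-1:ℝ)^(n-u) * (n.choose u)) * p.eval (u:ℝ)
      = (-1:ℝ)^n * ((-1:ℝ)^u * (n.choose u) * p.eval (u:ℝ)) := by
    intro u hu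
    have hu' : u ≤ n := Nat.lt_succ_iff.mp (mem_range.mp hu)
    have key : (-1:ℝ)^(n-u) = (-1)^n * (-1)^u := by
      rw [← pow_add, show n + u = (n - u) + 2*u by omega, pow_add, pow_mul, neg_one_sq, one_pow,
        mul_one]
    rw [key]; ring
  rw [Finset.sum_congr rfl h3, ← Finset.mul_sum] at h2
  have := h2.symm
  rcases mul_eq_zero.mp this with h4 | h4
  · exact absurd h4 (by positivity)
  · exact h4

lemma Gamma_add_nat' (y : ℝ) (hy : 0 < y) (n : ℕ) :
    Real.Gamma (y + n) = (∏ i ∈ range n, (y + i)) * Real.Gamma y := by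
  induction n with
  | zero => simp
  | succ n ih =>
    have h1 : y + (n + 1 : ℕ) = (y + n) + 1 := by push_cast; ring
    rw [h1, Real.Gamma_add_one (by positivity), ih, prod_range_succ]
    ring

lemma genBinom_eval (ℓ k s : ℕ) (hs : s ≤ k) :
    genBinom ((ℓ : ℝ) + 2 * k - s + 1 / 2) k
      = (∏ i ∈ range k, ((ℓ : ℝ) + k - s + 3 / 2 + i)) / k.factorial := by
  have hy : (0:ℝ) < (ℓ : ℝ) + k - s + 3 / 2 := by
    have : (s:ℝ) ≤ k := by exact_mod_cast hs
    linarith [Nat.cast_nonneg (α := ℝ) ℓ]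
  have h1 : (ℓ : ℝ) + 2 * k - s + 1 / 2 + 1 = ((ℓ : ℝ) + k - s + 3 / 2) + k := by ring
  have h2 : (ℓ : ℝ) + 2 * k - s + 1 / 2 - k + 1 = (ℓ : ℝ) + k - s + 3 / 2 := by ring
  have hG : Real.Gamma ((ℓ : ℝ) + k - s + 3 / 2) ≠ 0 := (Real.Gamma_pos_of_pos hy).ne'
  rw [genBinom, h1, h2, Gamma_add_nat' _ hy k]
  rw [mul_comm ((k.factorial:ℝ)) (Real.Gamma _), ← div_div, mul_div_assoc,
    div_self hG, mul_one]

-- ∏_{i<k'} (j - i) = j! / (j-k')!  (as reals), for k' ≤ j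
lemma prod_desc (j k' : ℕ) (h : k' ≤ j) :
    ∏ i ∈ range k', ((j : ℝ) - i) = j.factorial / (j - k').factorial := by
  induction k' with
  | zero =>
    simp only [range_zero, prod_empty, Nat.sub_zero]
    rw [div_self (Nat.cast_ne_zero.mpr j.factorial_ne_zero)]
  | succ m ih =>
    have hm : m ≤ j := by omega
    obtain ⟨d, hd⟩ : ∃ d, j - (m+1) = d := ⟨_, rfl⟩
    have hjm : j - m = d + 1 := by omega
    have hcast : (j:ℝ) - m = (d:ℝ) + 1 := by
      have hj : j = d + (m+1) := by omega
      subst hj; push_cast; ring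
    rw [prod_range_succ, ih hm, hjm, hd, Nat.factorial_succ, hcast]
    have h3 : ((d:ℝ)+1) ≠ 0 := by positivity
    have h4 : ((d.factorial:ℝ)) ≠ 0 := Nat.cast_ne_zero.mpr d.factorial_ne_zero
    push_cast
    field_simp

lemma prod_fact (k : ℕ) : ∏ i ∈ range k, ((k : ℝ) - i) = k.factorial := by
  rw [prod_desc k k le_rfl]
  simp

lemma prod_neg_shift (j k' : ℕ) : ∏ i ∈ range k', ((i : ℝ) - j)
    = (-1 : ℝ) ^ k' * ∏ i ∈ range k', ((j : ℝ) - i) := by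
  calc ∏ i ∈ range k', ((i : ℝ) - j) = ∏ i ∈ range k', ((-1) * ((j:ℝ) - i)) :=
        prod_congr rfl fun i _ => by ring
    _ = (-1 : ℝ) ^ k' * ∏ i ∈ range k', ((j : ℝ) - i) := by
        rw [prod_mul_distrib, prod_const, card_range]

lemma fwdDiff_iter_inv (n : ℕ) (x : ℝ) (hx : 0 < x) :
    ∀ y : ℝ, 0 ≤ y → (Δ_[(1:ℝ)])^[n] (fun t => (x + t)⁻¹) y
      = (-1)^n * n.factorial / ∏ i ∈ range (n+1), (x + y + i) := by
  induction n with
  | zero =>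
    intro y hy
    simp [add_assoc]
  | succ n ih =>
    intro y hy
    have hpos : ∀ (y' : ℝ), 0 ≤ y' → ∀ m, (0:ℝ) < ∏ i ∈ range m, (x + y' + i) := by
      intro y' hy' m
      apply Finset.prod_pos
      intro i _
      positivity
    rw [Function.iterate_succ_apply']
    have : Δ_[(1:ℝ)] ((Δ_[(1:ℝ)])^[n] (fun t => (x + t)⁻¹)) y
        = (Δ_[(1:ℝ)])^[n] (fun t => (x + t)⁻¹) (y + 1) - (Δ_[(1:ℝ)])^[n] (fun t => (x + t)⁻¹) y := rfl
    rw [this, ih (y+1) (by linarith), ih y hy]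
    have hxy : (0:ℝ) < x + y := by linarith
    have e1 : ∏ i ∈ range (n+1), (x + (y+1) + i) = (∏ i ∈ range (n+2), (x + y + i)) / (x + y) := by
      rw [Finset.prod_range_succ' (fun i => x + y + i) (n+1)]
      push_cast
      rw [add_zero, mul_div_assoc, div_self hxy.ne', mul_one]
      apply Finset.prod_congr rfl
      intro i _
      ring
    have e2 : ∏ i ∈ range (n+1), (x + y + i) = (∏ i ∈ range (n+2), (x + y + i)) / (x + y + (n+1)) := by
      rw [Finset.prod_range_succ (fun i => x + y + i) (n+1)]
      push_cast
      field_simp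
    rw [e1, e2]
    have hP : (0:ℝ) < ∏ i ∈ range (n+2), (x + y + i) := hpos y hy (n+2)
    have hxyn : (0:ℝ) < x + y + (n+1) := by positivity
    rw [Nat.factorial_succ]
    field_simp
    push_cast; ring

lemma alt_sum_inv (n : ℕ) (x : ℝ) (hx : 0 < x) :
    ∑ u ∈ range (n + 1), (-1 : ℝ) ^ u * (n.choose u) * (x + u)⁻¹
      = n.factorial / ∏ i ∈ range (n + 1), (x + i) := by
  have h := fwdDiff_iter_eq_sum_shift (1:ℝ) (fun t => (x + t)⁻¹) n 0
  rw [fwdDiff_iter_inv n x hx 0 le_rfl] at h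
  have h2 : (-1:ℝ)^n * n.factorial / ∏ i ∈ range (n+1), (x + i)
      = ∑ u ∈ range (n+1), ((-1:ℝ)^(n-u) * (n.choose u)) * (x + u)⁻¹ := by
    calc (-1:ℝ)^n * n.factorial / ∏ i ∈ range (n+1), (x + i)
        = (-1:ℝ)^n * n.factorial / ∏ i ∈ range (n+1), (x + 0 + i) := by norm_num
      _ = ∑ u ∈ range (n+1), ((-1:ℤ)^(n-u) * (n.choose u)) • (x + ((0:ℝ) + u • (1:ℝ)))⁻¹ := h
      _ = ∑ u ∈ range (n+1), ((-1:ℝ)^(n-u) * (n.choose u)) * (x + u)⁻¹ := by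
          refine Finset.sum_congr rfl fun u hu => ?_
          simp [zsmul_eq_mul]
  have h3 : ∀ u ∈ range (n+1), ((-1:ℝ)^(n-u) * (n.choose u)) * (x + u)⁻¹
      = (-1:ℝ)^n * ((-1:ℝ)^u * (n.choose u) * (x + u)⁻¹) := by
    intro u hu
    have hu' : u ≤ n := Nat.lt_succ_iff.mp (mem_range.mp hu)
    have key : (-1:ℝ)^(n-u) = (-1)^n * (-1)^u := by
      rw [← pow_add, show n + u = (n - u) + 2*u by omega, pow_add, pow_mul, neg_one_sq, one_pow,
        mul_one]
    rw [key]; ring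
  rw [Finset.sum_congr rfl h3, ← Finset.mul_sum] at h2
  have hne : ((-1:ℝ)^n) ≠ 0 := by positivity
  rw [mul_div_assoc] at h2
  exact (mul_left_cancel₀ hne h2).symm

lemma key_inner (k' j : ℕ) (A : ℝ) (hA : 0 < A) :
    ∑ u ∈ range (k' + 1), (-1 : ℝ) ^ u * (k'.choose u) *
        ((∏ i ∈ range k', (A + u + i)) / (A + j + u))
      = (∏ i ∈ range k', ((i : ℝ) - j)) * k'.factorial / ∏ i ∈ range (k' + 1), (A + j + i) := by
  set x : ℝ := A + j with hxdef
  have hx : 0 < x := by positivity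
  set P : ℝ[X] := ∏ i ∈ range k', (X + C (A + i)) with hP
  have hPmonic : P.Monic := monic_prod_of_monic _ _ fun i _ => monic_X_add_C _
  have hPdeg : P.natDegree = k' := by
    rw [hP, natDegree_prod_of_monic _ _ fun i _ => monic_X_add_C _]
    simp only [natDegree_X_add_C, Finset.sum_const, smul_eq_mul, mul_one, card_range]
  have hPeval : ∀ t : ℝ, P.eval t = ∏ i ∈ range k', (A + t + i) := by
    intro t
    rw [hP, eval_prod]
    exact Finset.prod_congr rfl fun i _ => by simp; ring
  obtain ⟨Q, hQ⟩ : (X - C (-x)) ∣ P - C (P.eval (-x)) := X_sub_C_dvd_sub_C_eval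
  have hXC : X - C (-x) = X + C x := by rw [map_neg, sub_neg_eq_add]
  have hQ' : P - C (P.eval (-x)) = (X + C x) * Q := by rw [hQ, hXC]
  have hQdeg : Q.degree < (k' : ℕ) := by
    rcases eq_or_ne Q 0 with rfl | hQne
    · rw [degree_zero]
      exact bot_lt_iff_ne_bot.mpr (by simp)
    · have h1 : (1 : WithBot ℕ) + Q.degree ≤ (k' : ℕ) := by
        rw [← degree_X_add_C x, ← degree_mul, ← hQ']
        refine le_trans (degree_sub_le _ _) (max_le ?_ ?_)
        · rw [degree_eq_natDegree hPmonic.ne_zero, hPdeg]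
        · exact le_trans degree_C_le (by exact_mod_cast Nat.zero_le k')
      rw [degree_eq_natDegree hQne] at h1 ⊢
      have h2 : 1 + Q.natDegree ≤ k' := by exact_mod_cast h1
      exact_mod_cast Nat.lt_of_lt_of_le (Nat.lt_succ_self _) (by omega)
  have hdecomp : ∀ u : ℕ, (∏ i ∈ range k', (A + u + i)) / (x + u)
      = Q.eval (u:ℝ) + P.eval (-x) * (x + u)⁻¹ := by
    intro u
    have hxu : (0:ℝ) < x + u := by positivity
    have h := congrArg (eval (u:ℝ)) hQ'
    simp only [eval_sub, eval_C, eval_mul, eval_add, eval_X] at h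
    rw [hPeval] at h
    field_simp
    linear_combination h
  have hsplit : ∑ u ∈ range (k' + 1), (-1 : ℝ) ^ u * (k'.choose u) *
        ((∏ i ∈ range k', (A + u + i)) / (A + j + u))
      = (∑ u ∈ range (k' + 1), (-1 : ℝ) ^ u * (k'.choose u) * Q.eval (u:ℝ))
        + P.eval (-x) * ∑ u ∈ range (k' + 1), (-1 : ℝ) ^ u * (k'.choose u) * (x + u)⁻¹ := by
    rw [Finset.mul_sum, ← Finset.sum_add_distrib]
    refine Finset.sum_congr rfl fun u hu => ?_
    rw [← hxdef, hdecomp u]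
    ring
  rw [hsplit, alt_sum_poly k' Q hQdeg, alt_sum_inv k' x hx, zero_add]
  have hPx : P.eval (-x) = ∏ i ∈ range k', ((i : ℝ) - j) := by
    rw [hPeval (-x)]
    refine Finset.prod_congr rfl fun i _ => ?_
    rw [hxdef]; ring
  rw [hPx]
  ring

lemma zernike_integral (ℓ k k' : ℕ) :
    (∫ r in (0:ℝ)..1, zernikeR ℓ k r * zernikeR ℓ k' r * r ^ 2)
    = Real.sqrt (2*ℓ+4*k+3) * Real.sqrt (2*ℓ+4*k'+3) *
      ∑ s ∈ range (k+1), ∑ t ∈ range (k'+1),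
        ((-1:ℝ)^s * (k.choose s) * genBinom ((ℓ:ℝ)+2*k-s+1/2) k) *
        ((-1:ℝ)^t * (k'.choose t) * genBinom ((ℓ:ℝ)+2*k'-t+1/2) k') /
        ((((ℓ+2*k-2*s) + (ℓ+2*k'-2*t) + 2 : ℕ) : ℝ) + 1) := by
  have hfun : (fun r : ℝ => zernikeR ℓ k r * zernikeR ℓ k' r * r^2)
      = fun r => ∑ s ∈ range (k+1), ∑ t ∈ range (k'+1),
          (Real.sqrt (2*ℓ+4*k+3) * Real.sqrt (2*ℓ+4*k'+3) *
            (((-1:ℝ)^s * (k.choose s) * genBinom ((ℓ:ℝ)+2*k-s+1/2) k) *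
             ((-1:ℝ)^t * (k'.choose t) * genBinom ((ℓ:ℝ)+2*k'-t+1/2) k')))
          * r ^ ((ℓ+2*k-2*s) + (ℓ+2*k'-2*t) + 2) := by
    funext r
    rw [zernikeR, zernikeR]
    rw [show (Real.sqrt (2*ℓ+4*k+3) * ∑ s ∈ range (k + 1),
        (-1 : ℝ) ^ s * (k.choose s) * genBinom ((ℓ : ℝ) + 2 * k - s + 1 / 2) k *
          r ^ (ℓ + 2 * k - 2 * s)) *
        (Real.sqrt (2*ℓ+4*k'+3) * ∑ t ∈ range (k' + 1),
        (-1 : ℝ) ^ t * (k'.choose t) * genBinom ((ℓ : ℝ) + 2 * k' - t + 1 / 2) k' *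
          r ^ (ℓ + 2 * k' - 2 * t)) * r ^ 2
      = Real.sqrt (2*ℓ+4*k+3) * Real.sqrt (2*ℓ+4*k'+3) *
        ((∑ s ∈ range (k + 1),
        (-1 : ℝ) ^ s * (k.choose s) * genBinom ((ℓ : ℝ) + 2 * k - s + 1 / 2) k *
          r ^ (ℓ + 2 * k - 2 * s)) *
        (∑ t ∈ range (k' + 1),
        (-1 : ℝ) ^ t * (k'.choose t) * genBinom ((ℓ : ℝ) + 2 * k' - t + 1 / 2) k' *
          r ^ (ℓ + 2 * k' - 2 * t))) * r ^ 2 from by ring]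
    rw [Finset.sum_mul_sum]
    rw [Finset.mul_sum, Finset.sum_mul]
    refine Finset.sum_congr rfl fun s hs => ?_
    rw [Finset.mul_sum, Finset.sum_mul]
    refine Finset.sum_congr rfl fun t ht => ?_
    rw [pow_add, pow_add]
    ring
  rw [hfun]
  rw [intervalIntegral.integral_finset_sum (fun s _ =>
    ((continuous_finset_sum _ fun t _ =>
      continuous_const.fun_mul (continuous_pow _)).intervalIntegrable 0 1))]
  rw [Finset.mul_sum]
  refine Finset.sum_congr rfl fun s hs => ?_
  rw [intervalIntegral.integral_finset_sum (fun t _ =>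
    ((continuous_const.fun_mul (continuous_pow _)).intervalIntegrable 0 1))]
  rw [Finset.mul_sum]
  refine Finset.sum_congr rfl fun t ht => ?_
  rw [intervalIntegral.integral_const_mul, integral_pow]
  simp only [one_pow, zero_pow, sub_zero]
  push_cast
  ring

lemma inner_eval (ℓ k' j : ℕ) :
    ∑ t ∈ range (k' + 1), (-1 : ℝ) ^ t * (k'.choose t) *
        ((∏ i ∈ range k', ((ℓ:ℝ) + k' - t + 3/2 + i)) / k'.factorial) /
        (2 * ((ℓ:ℝ) + 3/2 + j) + 2 * (k':ℝ) - 2 * t)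
      = (-1:ℝ) ^ k' * (∏ i ∈ range k', ((i:ℝ) - j)) /
        (2 * ∏ i ∈ range (k'+1), ((ℓ:ℝ) + 3/2 + j + i)) := by
  set A : ℝ := (ℓ:ℝ) + 3/2 with hAdef
  have hA : 0 < A := by positivity
  rw [← Finset.sum_range_reflect]
  have hstep : ∀ u ∈ range (k'+1),
      (-1 : ℝ) ^ (k' + 1 - 1 - u) * (k'.choose (k' + 1 - 1 - u)) *
        ((∏ i ∈ range k', ((ℓ:ℝ) + k' - (k' + 1 - 1 - u : ℕ) + 3/2 + i)) / k'.factorial) /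
        (2 * ((ℓ:ℝ) + 3/2 + j) + 2 * (k':ℝ) - 2 * (k' + 1 - 1 - u : ℕ))
      = ((-1:ℝ)^k' / (2 * k'.factorial)) *
        ((-1 : ℝ) ^ u * (k'.choose u) * ((∏ i ∈ range k', (A + u + i)) / (A + j + u))) := by
    intro u hu
    have hu' : u ≤ k' := Nat.lt_succ_iff.mp (mem_range.mp hu)
    have hred : k' + 1 - 1 - u = k' - u := by omega
    have e1 : ((k' - u : ℕ) : ℝ) = (k':ℝ) - u := Nat.cast_sub hu'
    have e2 : (-1:ℝ)^(k'-u) = (-1)^k' * (-1)^u := by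
      rw [← pow_add, show k' + u = (k' - u) + 2*u by omega, pow_add, pow_mul, neg_one_sq,
        one_pow, mul_one]
    have e3 : k'.choose (k'-u) = k'.choose u := Nat.choose_symm hu'
    have e4 : ∏ i ∈ range k', ((ℓ:ℝ) + k' - ((k':ℝ) - u) + 3/2 + i)
        = ∏ i ∈ range k', (A + u + i) := by
      refine prod_congr rfl fun i _ => ?_
      rw [hAdef]; ring
    rw [hred, e1, e2, e3, e4]
    have hden1 : 2 * ((ℓ:ℝ) + 3/2 + j) + 2 * (k':ℝ) - 2 * ((k':ℝ) - u) = 2 * (A + j + u) := by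
      rw [hAdef]; ring
    rw [hden1]
    have h5 : (0:ℝ) < A + j + u := by positivity
    have h6 : ((k'.factorial : ℝ)) ≠ 0 := Nat.cast_ne_zero.mpr k'.factorial_ne_zero
    field_simp
  rw [Finset.sum_congr rfl hstep, ← Finset.mul_sum, key_inner k' j A hA]
  have h6 : ((k'.factorial : ℝ)) ≠ 0 := Nat.cast_ne_zero.mpr k'.factorial_ne_zero
  have h7 : (0:ℝ) < ∏ i ∈ range (k'+1), (A + j + i) := by
    apply prod_pos; intro i _; positivity
  field_simp

lemma main_sum (ℓ k k' : ℕ) (hk : k' ≤ k) :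
    ∑ s ∈ range (k+1), ∑ t ∈ range (k'+1),
      ((-1:ℝ)^s * (k.choose s) * ((∏ i ∈ range k, ((ℓ:ℝ) + k - s + 3/2 + i)) / k.factorial)) *
      ((-1:ℝ)^t * (k'.choose t) * ((∏ i ∈ range k', ((ℓ:ℝ) + k' - t + 3/2 + i)) / k'.factorial)) /
      ((((ℓ+2*k-2*s) + (ℓ+2*k'-2*t) + 2 : ℕ) : ℝ) + 1)
    = if k = k' then 1 / (2*(ℓ:ℝ) + 4*(k:ℝ) + 3) else 0 := by
  set A : ℝ := (ℓ:ℝ) + 3/2 with hAdef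
  -- Step 1: evaluate inner sums
  have houter : ∀ s ∈ range (k+1),
      ∑ t ∈ range (k'+1),
        ((-1:ℝ)^s * (k.choose s) * ((∏ i ∈ range k, ((ℓ:ℝ) + k - s + 3/2 + i)) / k.factorial)) *
        ((-1:ℝ)^t * (k'.choose t) * ((∏ i ∈ range k', ((ℓ:ℝ) + k' - t + 3/2 + i)) / k'.factorial)) /
        ((((ℓ+2*k-2*s) + (ℓ+2*k'-2*t) + 2 : ℕ) : ℝ) + 1)
      = ((-1:ℝ)^s * (k.choose s) * ((∏ i ∈ range k, (A + (k - s : ℕ) + i)) / k.factorial)) *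
        ((-1:ℝ)^k' * (∏ i ∈ range k', ((i:ℝ) - (k - s : ℕ))) /
          (2 * ∏ i ∈ range (k'+1), (A + (k - s : ℕ) + i))) := by
    intro s hs
    have hs' : s ≤ k := Nat.lt_succ_iff.mp (mem_range.mp hs)
    have hcs : ((k - s : ℕ) : ℝ) = (k:ℝ) - s := Nat.cast_sub hs'
    have hprod1 : ∏ i ∈ range k, (A + (k - s : ℕ) + i)
        = ∏ i ∈ range k, ((ℓ:ℝ) + k - s + 3/2 + i) := by
      refine prod_congr rfl fun i _ => ?_
      rw [hcs, hAdef]; ring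
    rw [hprod1, ← inner_eval ℓ k' (k - s), Finset.mul_sum]
    refine Finset.sum_congr rfl fun t ht => ?_
    have ht' : t ≤ k' := Nat.lt_succ_iff.mp (mem_range.mp ht)
    have hden : (((ℓ+2*k-2*s) + (ℓ+2*k'-2*t) + 2 : ℕ) : ℝ) + 1
        = 2 * ((ℓ:ℝ) + 3/2 + (k - s : ℕ)) + 2 * (k':ℝ) - 2 * t := by
      have h1 : (ℓ+2*k-2*s) + (ℓ+2*k'-2*t) + 2 = 2*ℓ + 2*(k-s) + 2*(k'-t) + 2 := by omega
      rw [h1]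
      push_cast [Nat.cast_sub hs', Nat.cast_sub ht']
      ring
    rw [hden]
    ring
  rw [Finset.sum_congr rfl houter]
  clear houter
  by_cases hkk : k = k'
  · -- diagonal case
    subst hkk
    rw [if_pos rfl]
    rw [Finset.sum_eq_single 0]
    · -- main term s = 0
      simp only [Nat.sub_zero, pow_zero, Nat.choose_zero_right, Nat.cast_one, one_mul, mul_one]
      rw [prod_neg_shift k k, prod_fact]
      rw [prod_range_succ]
      have h1 : (0:ℝ) < ∏ i ∈ range k, (A + (k:ℕ) + i) := by
        apply prod_pos; intro i _; positivity
      have h2 : ((k.factorial : ℝ)) ≠ 0 := Nat.cast_ne_zero.mpr k.factorial_ne_zero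
      have h3 : (0:ℝ) < A + (k:ℕ) + (k:ℝ) := by positivity
      have h4 : (0:ℝ) < 2*(ℓ:ℝ) + 4*k + 3 := by positivity
      have hsq2 : (-1:ℝ)^k * ((-1:ℝ)^k * (k.factorial:ℝ)) = (k.factorial:ℝ) := by
        rw [← mul_assoc, ← pow_add, ← two_mul, pow_mul, neg_one_sq, one_pow, one_mul]
      rw [hsq2, hAdef]
      rw [hAdef] at h1 h3
      field_simp
      ring
    · -- other terms vanish
      intro s hs hs0
      have hs' : s ≤ k := Nat.lt_succ_iff.mp (mem_range.mp hs)
      have hlt : k - s < k := by omega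
      have hz : ∏ i ∈ range k, ((i:ℝ) - (k - s : ℕ)) = 0 := by
        apply Finset.prod_eq_zero (Finset.mem_range.mpr hlt)
        simp
      rw [hz]
      ring
    · intro h; exact absurd (Finset.mem_range.mpr (Nat.succ_pos k)) h
  · -- off-diagonal case : k' < k
    rw [if_neg hkk]
    have hk'k : k' < k := lt_of_le_of_ne hk (fun h => hkk h.symm)
    obtain ⟨m, hm⟩ : ∃ m, k = m + 1 + k' := ⟨k - k' - 1, by omega⟩
    -- terms with s > m + 1 vanish
    rw [← Finset.sum_subset (Finset.range_subset_range.mpr (show m + 2 ≤ k + 1 by omega))]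
    swap
    · intro s hs hns
      have hs1 : m + 2 ≤ s := by
        by_contra hcon
        exact hns (Finset.mem_range.mpr (by omega))
      have hsk : s < k + 1 := mem_range.mp hs
      have hlt : k - s < k' := by omega
      have hz : ∏ i ∈ range k', ((i:ℝ) - (k - s : ℕ)) = 0 := by
        apply Finset.prod_eq_zero (Finset.mem_range.mpr hlt)
        simp
      rw [hz]
      ring
    -- now the remaining alternating sum vanishes by polynomial degree
    set p : ℝ[X] := ∏ i ∈ range m, (Polynomial.C (A + k + k' + 1 + i) - Polynomial.X) with hpdef
    have hpdeg : p.degree < ((m+1 : ℕ) : WithBot ℕ) := by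
      have : p.degree = (m : ℕ) := by
        rw [hpdef, degree_prod]
        have : ∀ i ∈ range m, (Polynomial.C (A + k + k' + 1 + i) - Polynomial.X).degree = 1 := by
          intro i _
          rw [show Polynomial.C (A + (k:ℝ) + k' + 1 + i) - Polynomial.X
            = -(Polynomial.X - Polynomial.C (A + k + k' + 1 + i)) by ring, degree_neg,
            degree_X_sub_C]
        rw [Finset.sum_congr rfl this]
        simp
      rw [this]
      exact_mod_cast Nat.lt_succ_self m
    have hterm : ∀ s ∈ range (m+2),
        ((-1:ℝ)^s * (k.choose s) * ((∏ i ∈ range k, (A + (k - s : ℕ) + i)) / k.factorial)) *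
        ((-1:ℝ)^k' * (∏ i ∈ range k', ((i:ℝ) - (k - s : ℕ))) /
          (2 * ∏ i ∈ range (k'+1), (A + (k - s : ℕ) + i)))
        = (1 / (2 * ((m+1).factorial : ℝ))) *
          ((-1:ℝ)^s * ((m+1).choose s) * p.eval (s:ℝ)) := by
      intro s hs
      have hs1 : s ≤ m + 1 := Nat.lt_succ_iff.mp (mem_range.mp hs)
      have hs' : s ≤ k := by omega
      have hjk' : k' ≤ k - s := by omega
      -- product of (i - j) via descending factorial
      rw [prod_neg_shift (k-s) k', prod_desc (k-s) k' hjk']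
      -- split the long product
      have hsplit : ∏ i ∈ range k, (A + (k - s : ℕ) + i)
          = (∏ i ∈ range (k'+1), (A + (k - s : ℕ) + i)) *
            ∏ i ∈ range m, (A + (k - s : ℕ) + (k' + 1 + i : ℕ)) := by
        rw [show k = (k' + 1) + m by omega, Finset.prod_range_add]
      rw [hsplit]
      -- polynomial evaluation
      have hpeval : p.eval (s:ℝ) = ∏ i ∈ range m, (A + (k - s : ℕ) + (k' + 1 + i : ℕ)) := by
        rw [hpdef, eval_prod]
        refine prod_congr rfl fun i _ => ?_
        rw [eval_sub, eval_C, eval_X, Nat.cast_sub hs']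
        push_cast
        ring
      rw [hpeval]
      -- choose identity (cleared of divisions)
      have e3 : (k - s) - k' = (m+1) - s := by omega
      have hch2 : (k.choose s : ℝ) * ((k-s).factorial : ℝ) * (((m+1).factorial : ℝ))
          = (((m+1).choose s : ℝ)) * (k.factorial : ℝ) * ((((k-s) - k').factorial : ℝ)) := by
        rw [Nat.cast_choose ℝ hs', Nat.cast_choose ℝ hs1, e3]
        have f2 : ((s.factorial:ℝ)) ≠ 0 := Nat.cast_ne_zero.mpr s.factorial_ne_zero
        have f3 : (((k-s).factorial:ℝ)) ≠ 0 := Nat.cast_ne_zero.mpr (k-s).factorial_ne_zero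
        have f4 : ((((m+1)-s).factorial:ℝ)) ≠ 0 :=
          Nat.cast_ne_zero.mpr ((m+1)-s).factorial_ne_zero
        field_simp
      -- clean the double sign
      have hsq : (-1:ℝ)^k' * ((-1:ℝ)^k' * (((k-s).factorial : ℝ) / (((k-s) - k').factorial : ℝ)))
          = ((k-s).factorial : ℝ) / (((k-s) - k').factorial : ℝ) := by
        rw [← mul_assoc, ← pow_add, ← two_mul, pow_mul, neg_one_sq, one_pow, one_mul]
      rw [hsq]
      -- final algebra
      set P1 : ℝ := ∏ i ∈ range (k'+1), (A + (k - s : ℕ) + i) with hP1def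
      set P2 : ℝ := ∏ i ∈ range m, (A + (k - s : ℕ) + (k' + 1 + i : ℕ)) with hP2def
      have hP : (0:ℝ) < P1 := by
        rw [hP1def]; apply prod_pos; intro i _; positivity
      have f1 : ((k.factorial:ℝ)) ≠ 0 := Nat.cast_ne_zero.mpr k.factorial_ne_zero
      have f3 : (((k-s).factorial:ℝ)) ≠ 0 := Nat.cast_ne_zero.mpr (k-s).factorial_ne_zero
      have f6 : ((((k-s) - k').factorial:ℝ)) ≠ 0 :=
        Nat.cast_ne_zero.mpr ((k-s) - k').factorial_ne_zero
      have f5 : (((m+1).factorial:ℝ)) ≠ 0 := Nat.cast_ne_zero.mpr (m+1).factorial_ne_zero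
      calc ((-1:ℝ)^s * (k.choose s) * ((P1 * P2) / k.factorial)) *
          ((((k-s).factorial : ℝ) / (((k-s) - k').factorial : ℝ)) / (2 * P1))
          = ((-1:ℝ)^s * ((k.choose s : ℝ) * ((k-s).factorial : ℝ) * ((m+1).factorial : ℝ)) * P2) /
            ((k.factorial : ℝ) * (((k-s) - k').factorial : ℝ) * ((m+1).factorial : ℝ) * 2) := by
            field_simp
        _ = ((-1:ℝ)^s * (((m+1).choose s : ℝ) * (k.factorial : ℝ) * ((((k-s) - k').factorial : ℝ))) * P2) /
            ((k.factorial : ℝ) * (((k-s) - k').factorial : ℝ) * ((m+1).factorial : ℝ) * 2) := by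
            rw [hch2]
        _ = (1 / (2 * ((m+1).factorial : ℝ))) * ((-1:ℝ)^s * ((m+1).choose s) * P2) := by
            field_simp
    rw [Finset.sum_congr rfl hterm, ← Finset.mul_sum]
    rw [show (m + 2) = (m + 1) + 1 by rfl]
    rw [alt_sum_poly (m+1) p hpdeg, mul_zero]

end ZernikeAux

theorem zernikeR_orthonormal (ℓ k k' : ℕ) :
    ∫ r in (0 : ℝ)..1, zernikeR ℓ k r * zernikeR ℓ k' r * r ^ 2 =
      if k = k' then 1 else 0 := by
  have main : ∀ a b : ℕ, b ≤ a →
      (∫ r in (0 : ℝ)..1, zernikeR ℓ a r * zernikeR ℓ b r * r ^ 2) =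
        if a = b then 1 else 0 := by
    intro a b hba
    rw [zernike_integral ℓ a b]
    have hcong : ∑ s ∈ Finset.range (a+1), ∑ t ∈ Finset.range (b+1),
        ((-1:ℝ)^s * (a.choose s) * genBinom ((ℓ:ℝ)+2*a-s+1/2) a) *
        ((-1:ℝ)^t * (b.choose t) * genBinom ((ℓ:ℝ)+2*b-t+1/2) b) /
        ((((ℓ+2*a-2*s) + (ℓ+2*b-2*t) + 2 : ℕ) : ℝ) + 1)
        = ∑ s ∈ Finset.range (a+1), ∑ t ∈ Finset.range (b+1),
          ((-1:ℝ)^s * (a.choose s) *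
            ((∏ i ∈ Finset.range a, ((ℓ:ℝ) + a - s + 3/2 + i)) / a.factorial)) *
          ((-1:ℝ)^t * (b.choose t) *
            ((∏ i ∈ Finset.range b, ((ℓ:ℝ) + b - t + 3/2 + i)) / b.factorial)) /
          ((((ℓ+2*a-2*s) + (ℓ+2*b-2*t) + 2 : ℕ) : ℝ) + 1) := by
      refine Finset.sum_congr rfl fun s hs => Finset.sum_congr rfl fun t ht => ?_
      rw [genBinom_eval ℓ a s (Nat.lt_succ_iff.mp (Finset.mem_range.mp hs)),
        genBinom_eval ℓ b t (Nat.lt_succ_iff.mp (Finset.mem_range.mp ht))]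
    rw [hcong, main_sum ℓ a b hba]
    by_cases h : a = b
    · subst h
      rw [if_pos rfl, if_pos rfl]
      have hN : (0:ℝ) ≤ 2*(ℓ:ℝ) + 4*(a:ℝ) + 3 := by positivity
      have hN' : (2*(ℓ:ℝ) + 4*(a:ℝ) + 3) ≠ 0 := by positivity
      rw [Real.mul_self_sqrt hN]
      field_simp
    · rw [if_neg h, if_neg h, mul_zero]
  rcases le_total k' k with h | h
  · exact main k k' h
  · have h2 := main k' k h
    have hcomm : (fun r : ℝ => zernikeR ℓ k r * zernikeR ℓ k' r * r ^ 2)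
        = fun r : ℝ => zernikeR ℓ k' r * zernikeR ℓ k r * r ^ 2 := by
      funext r; ring
    calc (∫ r in (0 : ℝ)..1, zernikeR ℓ k r * zernikeR ℓ k' r * r ^ 2)
        = ∫ r in (0 : ℝ)..1, zernikeR ℓ k' r * zernikeR ℓ k r * r ^ 2 := by rw [hcomm]
      _ = if k' = k then 1 else 0 := h2
      _ = if k = k' then 1 else 0 := by simp [eq_comm]

end
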